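/- Let ε ∈ (0,1], let k ≥ 1 be an integer, and let Q be the output of the Frequent Directions algorithm run on an n×d matrix A with parameter ℓ = ⌈k + k/ε⌉. Then: (i) for every unit vector x ∈ ℝ^d, 0 ≤ ‖Ax‖² − ‖Qx‖² ≤ ‖A‖_F²/ℓ; (ii) ‖A − π_{Q_k}(A)‖_F² ≤ (1+ε)‖A − A_k‖_F²; and (iii) ‖A‖_F² − ‖A_k‖_F² ≤ ‖A‖_F² − ‖Q_k‖_F² ≤ (1+ε)(‖A‖_F² − ‖A_k‖_F²). -/

import Mathlib

open Matrix

/-- The squared Euclidean norm of a vector in `ℝ^m`. -/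
noncomputable def sqNorm {m : ℕ} (v : Fin m → ℝ) : ℝ := ∑ i, v i ^ 2

/-- The squared Frobenius norm of a real matrix. -/
noncomputable def frobSq {m p : ℕ} (M : Matrix (Fin m) (Fin p) ℝ) : ℝ :=
  ∑ i, ∑ j, M i j ^ 2

lemma sqNorm_eq_dot {m : ℕ} (u : Fin m → ℝ) : sqNorm u = u ⬝ᵥ u := by
  simp [sqNorm, dotProduct, sq]

lemma sqNorm_nonneg' {m : ℕ} (u : Fin m → ℝ) : 0 ≤ sqNorm u :=
  Finset.sum_nonneg fun _ _ => sq_nonneg _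

lemma frobSq_nonneg' {m p : ℕ} (M : Matrix (Fin m) (Fin p) ℝ) : 0 ≤ frobSq M :=
  Finset.sum_nonneg fun _ _ => Finset.sum_nonneg fun _ _ => sq_nonneg _

lemma sqNorm_mulVec {m p : ℕ} (M : Matrix (Fin m) (Fin p) ℝ) (x : Fin p → ℝ) :
    sqNorm (M.mulVec x) = x ⬝ᵥ (Mᵀ * M).mulVec x := by
  rw [sqNorm_eq_dot, ← mulVec_mulVec, dotProduct_mulVec x, vecMul_transpose]

lemma spectral {m d : ℕ} (M : Matrix (Fin m) (Fin d) ℝ) (v : Fin d → Fin d → ℝ) (σ : Fin d → ℝ)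
    (hv : ∀ a b, ∑ t, v a t * v b t = if a = b then 1 else 0)
    (hMv : ∀ a, (Mᵀ * M).mulVec (v a) = σ a ^ 2 • v a) (x : Fin d → ℝ) :
    sqNorm (M.mulVec x) = ∑ a, σ a ^ 2 * (v a ⬝ᵥ x) ^ 2 := by
  set V : Matrix (Fin d) (Fin d) ℝ := Matrix.of v with hV
  have hVVt : V * Vᵀ = 1 := by
    ext a b
    simpa [Matrix.mul_apply, Matrix.one_apply, hV] using hv a b
  have hVtV : Vᵀ * V = 1 := mul_eq_one_comm.mp hVVt
  have h1 : (Mᵀ * M) * Vᵀ = Vᵀ * Matrix.diagonal (fun a => σ a ^ 2) := by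
    ext t a
    rw [Matrix.mul_diagonal]
    have h := congrFun (hMv a) t
    simp only [mulVec, dotProduct, Pi.smul_apply, smul_eq_mul, Matrix.mul_apply,
      transpose_apply, hV, Matrix.of_apply] at h ⊢
    rw [h]; ring
  have key : Mᵀ * M = Vᵀ * Matrix.diagonal (fun a => σ a ^ 2) * V := by
    calc Mᵀ * M = (Mᵀ * M) * (Vᵀ * V) := by rw [hVtV, mul_one]
      _ = ((Mᵀ * M) * Vᵀ) * V := by simp only [Matrix.mul_assoc]
      _ = _ := by rw [h1]
  rw [sqNorm_mulVec, key, ← mulVec_mulVec, ← mulVec_mulVec,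
    dotProduct_mulVec x, vecMul_transpose]
  simp only [dotProduct, mulVec_diagonal]
  apply Finset.sum_congr rfl
  intro a _
  simp only [mulVec, dotProduct, hV, Matrix.of_apply]
  ring

lemma rearr {d : ℕ} (k : ℕ) (lam c : Fin d → ℝ)
    (hmono : ∀ a b : Fin d, a ≤ b → lam b ≤ lam a) (hnn : ∀ a, 0 ≤ lam a)
    (hc0 : ∀ a, 0 ≤ c a) (hc1 : ∀ a, c a ≤ 1)
    (hsum : ∑ a, c a ≤ ((Finset.univ.filter (fun a : Fin d => (a : ℕ) < k)).card : ℝ)) :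
    ∑ a, lam a * c a ≤ ∑ a ∈ Finset.univ.filter (fun a : Fin d => (a : ℕ) < k), lam a := by
  by_cases hkd : d ≤ k
  · have hfil : Finset.univ.filter (fun a : Fin d => (a : ℕ) < k) = Finset.univ := by
      apply Finset.filter_true_of_mem
      intro a _
      exact lt_of_lt_of_le a.isLt hkd
    rw [hfil]
    apply Finset.sum_le_sum
    intro a _
    nlinarith [hnn a, hc0 a, hc1 a]
  · push_neg at hkd
    set p : Fin d := ⟨k, hkd⟩ with hp
    set K := Finset.univ.filter (fun a : Fin d => (a : ℕ) < k) with hK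
    have hsplit : ∑ a, lam a * c a = ∑ a ∈ K, lam a * c a + ∑ a ∈ Kᶜ, lam a * c a :=
      (Finset.sum_add_sum_compl K _).symm
    have hcsplit : ∑ a, c a = ∑ a ∈ K, c a + ∑ a ∈ Kᶜ, c a :=
      (Finset.sum_add_sum_compl K _).symm
    have hcard : (K.card : ℝ) = ∑ a ∈ K, (1 : ℝ) := by simp
    have h1 : ∑ a ∈ K, lam a * c a ≤ ∑ a ∈ K, (lam a + lam p * (c a - 1)) := by
      apply Finset.sum_le_sum
      intro a ha
      have haK : (a : ℕ) < k := by simpa [hK] using ha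
      have hap : a ≤ p := le_of_lt (Fin.mk_lt_mk.mpr haK)
      have hlam : lam p ≤ lam a := hmono a p hap
      nlinarith [hc1 a]
    have h2 : ∑ a ∈ Kᶜ, lam a * c a ≤ ∑ a ∈ Kᶜ, lam p * c a := by
      apply Finset.sum_le_sum
      intro a ha
      have haK : ¬ (a : ℕ) < k := by simpa [hK] using ha
      have hap : p ≤ a := by
        have : k ≤ (a : ℕ) := not_lt.mp haK
        exact Fin.mk_le_mk.mpr this
      exact mul_le_mul_of_nonneg_right (hmono p a hap) (hc0 a)
    have hfinal : ∑ a ∈ K, (lam a + lam p * (c a - 1)) + ∑ a ∈ Kᶜ, lam p * c a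
        = ∑ a ∈ K, lam a + lam p * (∑ a, c a - K.card) := by
      rw [hcsplit]
      rw [Finset.sum_add_distrib, ← Finset.mul_sum, ← Finset.mul_sum]
      rw [Finset.sum_sub_distrib]
      ring_nf
      rw [Finset.card_eq_sum_ones K]
      push_cast
      ring
    have hlp : 0 ≤ lam p := hnn p
    calc ∑ a, lam a * c a ≤ ∑ a ∈ K, lam a + lam p * (∑ a, c a - K.card) := by
          rw [hsplit, ← hfinal]; exact add_le_add h1 h2
      _ ≤ ∑ a ∈ K, lam a := by nlinarith [hsum]

lemma bessel {d l : ℕ} (Y : Matrix (Fin d) (Fin l) ℝ) (hY : Yᵀ * Y = 1) (x : Fin d → ℝ) :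
    sqNorm (Yᵀ.mulVec x) ≤ sqNorm x := by
  set P : Matrix (Fin d) (Fin d) ℝ := Y * Yᵀ with hP
  have hPsym : Pᵀ = P := by rw [hP, transpose_mul, transpose_transpose]
  have hPP : P * P = P := by
    rw [hP, Matrix.mul_assoc, ← Matrix.mul_assoc Yᵀ, hY, Matrix.one_mul]
  have hG : sqNorm (Yᵀ.mulVec x) = x ⬝ᵥ P.mulVec x := by
    rw [sqNorm_mulVec, transpose_transpose]
  set R : Matrix (Fin d) (Fin d) ℝ := 1 - P with hR
  have hRsym : Rᵀ = R := by rw [hR, transpose_sub, transpose_one, hPsym]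
  have hRR : R * R = R := by
    rw [hR]
    rw [Matrix.sub_mul, Matrix.mul_sub, Matrix.mul_sub, hPP, Matrix.one_mul, Matrix.one_mul,
      Matrix.mul_one]
    abel
  have h0 : 0 ≤ sqNorm (R.mulVec x) := sqNorm_nonneg' _
  have h1 : sqNorm (R.mulVec x) = sqNorm x - sqNorm (Yᵀ.mulVec x) := by
    rw [sqNorm_mulVec, hRsym, hRR, hR, Matrix.sub_mulVec, Matrix.one_mulVec,
      dotProduct_sub, hG, sqNorm_eq_dot]
  linarith

lemma parseval {d : ℕ} (y : Fin d → Fin d → ℝ)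
    (hy : ∀ a b, ∑ t, y a t * y b t = if a = b then 1 else 0) (x : Fin d → ℝ) :
    ∑ i, (y i ⬝ᵥ x) ^ 2 = sqNorm x := by
  set W : Matrix (Fin d) (Fin d) ℝ := Matrix.of y with hW
  have hWWt : W * Wᵀ = 1 := by
    ext a b; simpa [Matrix.mul_apply, Matrix.one_apply, hW] using hy a b
  have hWtW : Wᵀ * W = 1 := mul_eq_one_comm.mp hWWt
  have : sqNorm (W.mulVec x) = sqNorm x := by
    rw [sqNorm_mulVec, hWtW, Matrix.one_mulVec, sqNorm_eq_dot]
  rw [← this]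
  simp [sqNorm, mulVec, hW]

lemma frobSq_eq_cols {m p : ℕ} (M : Matrix (Fin m) (Fin p) ℝ) :
    frobSq M = ∑ t, sqNorm (M.mulVec (Pi.single t 1)) := by
  rw [frobSq, Finset.sum_comm]
  apply Finset.sum_congr rfl
  intro t _
  apply Finset.sum_congr rfl
  intro i _
  congr 1
  simp [mulVec, dotProduct, Pi.single_apply, mul_ite]

lemma row_proj {d : ℕ} (a : Fin d → ℝ) (y : Fin d → Fin d → ℝ)
    (hy : ∀ a b, ∑ t, y a t * y b t = if a = b then 1 else 0) (K : Finset (Fin d)) :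
    ∑ t, (a t - ∑ i ∈ K, (∑ t', a t' * y i t') * y i t) ^ 2 =
      ∑ t, a t ^ 2 - ∑ i ∈ K, (∑ t', a t' * y i t') ^ 2 := by
  set c : Fin d → ℝ := fun i => ∑ t', a t' * y i t' with hcdef
  have e1 : ∑ t, a t * (∑ i ∈ K, c i * y i t) = ∑ i ∈ K, c i ^ 2 := by
    simp only [Finset.mul_sum]
    rw [Finset.sum_comm]
    apply Finset.sum_congr rfl
    intro i _
    calc ∑ t, a t * (c i * y i t) = c i * ∑ t, a t * y i t := by
          rw [Finset.mul_sum]; apply Finset.sum_congr rfl; intros; ring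
      _ = c i ^ 2 := by rw [sq]
  have e2 : ∑ t, (∑ i ∈ K, c i * y i t) ^ 2 = ∑ i ∈ K, c i ^ 2 := by
    calc ∑ t, (∑ i ∈ K, c i * y i t) ^ 2
        = ∑ t, ∑ i ∈ K, ∑ j ∈ K, (c i * c j) * (y i t * y j t) := by
          apply Finset.sum_congr rfl
          intro t _
          rw [sq, Finset.sum_mul_sum]
          apply Finset.sum_congr rfl; intro i _
          apply Finset.sum_congr rfl; intro j _
          ring
      _ = ∑ i ∈ K, ∑ j ∈ K, (c i * c j) * ∑ t, y i t * y j t := by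
          rw [Finset.sum_comm]
          apply Finset.sum_congr rfl; intro i _
          rw [Finset.sum_comm]
          apply Finset.sum_congr rfl; intro j _
          exact (Finset.mul_sum _ _ _).symm
      _ = ∑ i ∈ K, c i ^ 2 := by
          apply Finset.sum_congr rfl
          intro i hi
          rw [Finset.sum_eq_single i]
          · rw [hy i i]; simp; ring
          · intro j _ hj
            rw [hy i j, if_neg (Ne.symm hj)]; ring
          · intro h; exact absurd hi h
  calc ∑ t, (a t - ∑ i ∈ K, c i * y i t) ^ 2
      = ∑ t, (a t ^ 2 - 2 * (a t * (∑ i ∈ K, c i * y i t)) + (∑ i ∈ K, c i * y i t) ^ 2) := by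
        apply Finset.sum_congr rfl; intros; ring
    _ = ∑ t, a t ^ 2 - 2 * ∑ t, (a t * (∑ i ∈ K, c i * y i t)) + ∑ t, (∑ i ∈ K, c i * y i t) ^ 2 := by
        rw [Finset.sum_add_distrib, Finset.sum_sub_distrib, Finset.mul_sum]
    _ = ∑ t, a t ^ 2 - ∑ i ∈ K, c i ^ 2 := by rw [e1, e2]; ring

lemma proj_frob {n' d : ℕ} (A : Matrix (Fin n') (Fin d) ℝ) (y : Fin d → Fin d → ℝ)
    (hy : ∀ a b, ∑ t, y a t * y b t = if a = b then 1 else 0) (K : Finset (Fin d)) :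
    frobSq (A - Matrix.of fun rr t => ∑ i ∈ K, (∑ t', A rr t' * y i t') * y i t)
      = frobSq A - ∑ i ∈ K, sqNorm (A.mulVec (y i)) := by
  calc frobSq (A - Matrix.of fun rr t => ∑ i ∈ K, (∑ t', A rr t' * y i t') * y i t)
      = ∑ rr, ∑ t, (A rr t - ∑ i ∈ K, (∑ t', A rr t' * y i t') * y i t) ^ 2 := by
        apply Finset.sum_congr rfl; intro rr _
        apply Finset.sum_congr rfl; intro t _
        simp [Matrix.sub_apply]
    _ = ∑ rr, (∑ t, A rr t ^ 2 - ∑ i ∈ K, (∑ t', A rr t' * y i t') ^ 2) :=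
        Finset.sum_congr rfl (fun rr _ => row_proj (A rr) y hy K)
    _ = frobSq A - ∑ i ∈ K, sqNorm (A.mulVec (y i)) := by
        rw [Finset.sum_sub_distrib]
        congr 1
        rw [Finset.sum_comm]
        apply Finset.sum_congr rfl; intro i _
        simp [sqNorm, mulVec, dotProduct]

set_option maxHeartbeats 1000000

/-- Summary theorem for Frequent Directions with `ℓ = ⌈k + k/ε⌉`:
(i) for every unit vector `x`, `0 ≤ ‖Ax‖² - ‖Qx‖² ≤ ‖A‖_F²/ℓ`;
(ii) `‖A - π_{Q_k}(A)‖_F² ≤ (1 + ε) ‖A - A_k‖_F²`; and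
(iii) `‖A‖_F² - ‖A_k‖_F² ≤ ‖A‖_F² - ‖Q_k‖_F² ≤ (1 + ε)(‖A‖_F² - ‖A_k‖_F²)`. -/
theorem fd_main_theorem
    (n d ℓ : ℕ) (hℓ : 0 < ℓ)
    (A : Matrix (Fin n) (Fin d) ℝ)
    (Q : Fin (n + 1) → Matrix (Fin ℓ) (Fin d) ℝ)
    (C : Fin n → Matrix (Fin ℓ) (Fin d) ℝ)
    (Z : Fin n → Matrix (Fin ℓ) (Fin ℓ) ℝ)
    (Y : Fin n → Matrix (Fin d) (Fin ℓ) ℝ)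
    (s : Fin n → Fin ℓ → ℝ) (δ : Fin n → ℝ)
    -- the algorithm starts with the zero matrix
    (hQ0 : Q 0 = 0)
    -- `C i` is `Q^{i-1}` with its last row replaced by the `i`-th row of `A`
    (hC : ∀ i : Fin n,
      C i = (Q i.castSucc).updateRow ⟨ℓ - 1, Nat.sub_lt hℓ Nat.one_pos⟩ (A i))
    -- a singular value decomposition `C i = Z S Yᵀ` of `C i`
    (hZ : ∀ i, (Z i)ᵀ * Z i = 1)
    (hY : ∀ i, (Y i)ᵀ * Y i = 1)
    (hSVD : ∀ i, C i = Z i * Matrix.diagonal (s i) * (Y i)ᵀ)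
    (hmono : ∀ i, ∀ j j' : Fin ℓ, j ≤ j' → s i j' ≤ s i j)
    (hnn : ∀ i j, 0 ≤ s i j)
    -- `δ i` is the square of the smallest singular value of `C i`
    (hδ : ∀ i, δ i = s i ⟨ℓ - 1, Nat.sub_lt hℓ Nat.one_pos⟩ ^ 2)
    -- the shrinking step producing `Q^i = S' Yᵀ`
    (hQs : ∀ i : Fin n,
      Q i.succ = Matrix.diagonal (fun j => Real.sqrt (s i j ^ 2 - δ i)) * (Y i)ᵀ)
    -- `v` is an orthonormal family of right singular vectors of `A`,
    -- ordered by decreasing singular values `σA`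
    (v : Fin d → Fin d → ℝ) (σA : Fin d → ℝ)
    (hv : ∀ a b : Fin d, ∑ t, v a t * v b t = if a = b then 1 else 0)
    (hσmono : ∀ a b : Fin d, a ≤ b → σA b ≤ σA a)
    (hσnn : ∀ a, 0 ≤ σA a)
    (hAv : ∀ a, (Aᵀ * A).mulVec (v a) = σA a ^ 2 • v a)
    -- `y` is an orthonormal family of right singular vectors of the output
    -- matrix `Q = Qⁿ`, ordered by decreasing singular values `τ`
    (y : Fin d → Fin d → ℝ) (τ : Fin d → ℝ)
    (hy : ∀ a b : Fin d, ∑ t, y a t * y b t = if a = b then 1 else 0)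
    (hτmono : ∀ a b : Fin d, a ≤ b → τ b ≤ τ a)
    (hτnn : ∀ a, 0 ≤ τ a)
    (hQy : ∀ a, ((Q (Fin.last n))ᵀ * Q (Fin.last n)).mulVec (y a) = τ a ^ 2 • y a)
    (ε : ℝ) (hε0 : 0 < ε) (hε1 : ε ≤ 1) (k : ℕ) (hk : 1 ≤ k)
    (hℓdef : ℓ = ⌈(k : ℝ) + (k : ℝ) / ε⌉₊)
 :
    (∀ x : Fin d → ℝ, sqNorm x = 1 →
      0 ≤ sqNorm (A.mulVec x) - sqNorm ((Q (Fin.last n)).mulVec x) ∧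
      sqNorm (A.mulVec x) - sqNorm ((Q (Fin.last n)).mulVec x) ≤
        frobSq A / (ℓ : ℝ)) ∧
    frobSq (A - (Matrix.of fun rr t =>
      ∑ i ∈ Finset.univ.filter (fun i : Fin d => (i : ℕ) < k),
        (∑ t', A rr t' * y i t') * y i t)) ≤
      (1 + ε) * (frobSq A - ∑ i ∈ Finset.univ.filter (fun i : Fin d => (i : ℕ) < k), sqNorm (A.mulVec (v i))) ∧
    (frobSq A - (∑ i ∈ Finset.univ.filter (fun i : Fin d => (i : ℕ) < k), sqNorm (A.mulVec (v i))) ≤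
      frobSq A - (∑ i ∈ Finset.univ.filter (fun i : Fin d => (i : ℕ) < k),
      sqNorm ((Q (Fin.last n)).mulVec (y i))) ∧
    frobSq A - (∑ i ∈ Finset.univ.filter (fun i : Fin d => (i : ℕ) < k),
      sqNorm ((Q (Fin.last n)).mulVec (y i))) ≤
      (1 + ε) * (frobSq A - ∑ i ∈ Finset.univ.filter (fun i : Fin d => (i : ℕ) < k), sqNorm (A.mulVec (v i)))) := by
  classical
  -- basic facts about the singular values and δ
  have hδnn : ∀ i, 0 ≤ δ i := fun i => (hδ i) ▸ sq_nonneg _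
  have hδle : ∀ i (j : Fin ℓ), δ i ≤ s i j ^ 2 := by
    intro i j
    rw [hδ i]
    have hj : j ≤ (⟨ℓ - 1, Nat.sub_lt hℓ Nat.one_pos⟩ : Fin ℓ) := by
      rw [Fin.le_def]
      exact Nat.le_sub_one_of_lt j.isLt
    exact pow_le_pow_left₀ (hnn i _) (hmono i j _ hj) 2
  -- the last row of every Q j is zero
  have hrow0 : ∀ j : Fin (n + 1), ∀ t,
      Q j ⟨ℓ - 1, Nat.sub_lt hℓ Nat.one_pos⟩ t = 0 := by
    intro j
    induction j using Fin.cases with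
    | zero => intro t; rw [hQ0]; rfl
    | succ i =>
      intro t
      rw [hQs i, Matrix.diagonal_mul]
      have h0 : Real.sqrt (s i ⟨ℓ - 1, Nat.sub_lt hℓ Nat.one_pos⟩ ^ 2 - δ i) = 0 := by
        rw [hδ i]; simp
      rw [h0, zero_mul]
  -- the per-step identity
  have hstep : ∀ (i : Fin n) (x : Fin d → ℝ),
      sqNorm ((Q i.succ).mulVec x) = sqNorm ((Q i.castSucc).mulVec x) + (A i ⬝ᵥ x) ^ 2
        - δ i * sqNorm ((Y i)ᵀ.mulVec x) := by
    intro i x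
    have hCtC : (C i)ᵀ * C i = Y i * (Matrix.diagonal fun j => s i j * s i j) * (Y i)ᵀ := by
      rw [hSVD i]
      simp only [transpose_mul, transpose_transpose, diagonal_transpose, Matrix.mul_assoc]
      rw [← Matrix.mul_assoc ((Z i)ᵀ), hZ i, Matrix.one_mul,
        ← Matrix.mul_assoc (Matrix.diagonal (s i)), diagonal_mul_diagonal]
    have hCx : sqNorm ((C i).mulVec x) = ∑ j, s i j ^ 2 * ((Y i)ᵀ.mulVec x) j ^ 2 := by
      rw [sqNorm_mulVec, hCtC, ← Matrix.mulVec_mulVec, ← Matrix.mulVec_mulVec,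
        Matrix.dotProduct_mulVec x, ← Matrix.mulVec_transpose]
      simp only [dotProduct, mulVec_diagonal]
      apply Finset.sum_congr rfl
      intro j _
      ring
    have hQx : sqNorm ((Q i.succ).mulVec x)
        = ∑ j, (s i j ^ 2 - δ i) * ((Y i)ᵀ.mulVec x) j ^ 2 := by
      rw [hQs i, ← Matrix.mulVec_mulVec]
      simp only [sqNorm, Matrix.mulVec_diagonal]
      apply Finset.sum_congr rfl
      intro j _
      rw [mul_pow, Real.sq_sqrt (by linarith [hδle i j])]
    have hrowQ : (Q i.castSucc).mulVec x ⟨ℓ - 1, Nat.sub_lt hℓ Nat.one_pos⟩ = 0 := by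
      simp only [mulVec, dotProduct]
      apply Finset.sum_eq_zero
      intro t _
      rw [hrow0 i.castSucc t, zero_mul]
    have hupdate : (C i).mulVec x =
        Function.update ((Q i.castSucc).mulVec x) ⟨ℓ - 1, Nat.sub_lt hℓ Nat.one_pos⟩
          (A i ⬝ᵥ x) := by
      funext j
      rw [hC i]
      by_cases h : j = (⟨ℓ - 1, Nat.sub_lt hℓ Nat.one_pos⟩ : Fin ℓ)
      · subst h
        simp [mulVec, Matrix.updateRow_self, Function.update_self]
      · simp [mulVec, Matrix.updateRow_ne h, Function.update_of_ne h]
    have hCQ : sqNorm ((C i).mulVec x)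
        = sqNorm ((Q i.castSucc).mulVec x) + (A i ⬝ᵥ x) ^ 2 := by
      rw [hupdate]
      unfold sqNorm
      have hfun : (fun j => (Function.update ((Q i.castSucc).mulVec x)
            ⟨ℓ - 1, Nat.sub_lt hℓ Nat.one_pos⟩ (A i ⬝ᵥ x) j) ^ 2)
          = Function.update (fun j => ((Q i.castSucc).mulVec x j) ^ 2)
            ⟨ℓ - 1, Nat.sub_lt hℓ Nat.one_pos⟩ ((A i ⬝ᵥ x) ^ 2) := by
        funext j
        by_cases h : j = (⟨ℓ - 1, Nat.sub_lt hℓ Nat.one_pos⟩ : Fin ℓ)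
        · subst h; simp
        · simp [Function.update_of_ne h]
      rw [show (∑ j, (Function.update ((Q i.castSucc).mulVec x)
            ⟨ℓ - 1, Nat.sub_lt hℓ Nat.one_pos⟩ (A i ⬝ᵥ x) j) ^ 2)
          = ∑ j, Function.update (fun j => ((Q i.castSucc).mulVec x j) ^ 2)
            ⟨ℓ - 1, Nat.sub_lt hℓ Nat.one_pos⟩ ((A i ⬝ᵥ x) ^ 2) j from by rw [hfun]]
      rw [Finset.sum_update_of_mem (Finset.mem_univ _), Finset.sdiff_singleton_eq_erase]
      rw [← Finset.add_sum_erase _ _ (Finset.mem_univ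
        (⟨ℓ - 1, Nat.sub_lt hℓ Nat.one_pos⟩ : Fin ℓ))]
      rw [hrowQ]
      ring
    have hsplit : ∑ j, (s i j ^ 2 - δ i) * ((Y i)ᵀ.mulVec x) j ^ 2
        = (∑ j, s i j ^ 2 * ((Y i)ᵀ.mulVec x) j ^ 2) - δ i * ∑ j, ((Y i)ᵀ.mulVec x) j ^ 2 := by
      rw [Finset.mul_sum, ← Finset.sum_sub_distrib]
      apply Finset.sum_congr rfl
      intros; ring
    have hGdef : sqNorm ((Y i)ᵀ.mulVec x) = ∑ j, ((Y i)ᵀ.mulVec x) j ^ 2 := rfl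
    rw [hQx, hsplit, ← hCx, hCQ, hGdef]
  -- telescoping to the main identity
  have hmain : ∀ x, sqNorm ((Q (Fin.last n)).mulVec x)
      = sqNorm (A.mulVec x) - ∑ i, δ i * sqNorm ((Y i)ᵀ.mulVec x) := by
    intro x
    have htel : ∀ m : ℕ, ∀ hm : m ≤ n,
        sqNorm ((Q ⟨m, Nat.lt_succ_of_le hm⟩).mulVec x)
          = ∑ i ∈ Finset.univ.filter (fun i : Fin n => (i : ℕ) < m),
              ((A i ⬝ᵥ x) ^ 2 - δ i * sqNorm ((Y i)ᵀ.mulVec x)) := by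
      intro m
      induction m with
      | zero =>
        intro hm
        have h0 : (⟨0, Nat.lt_succ_of_le hm⟩ : Fin (n + 1)) = 0 := rfl
        have hempty : Finset.univ.filter (fun i : Fin n => (i : ℕ) < 0) = ∅ := by
          ext j; simp
        rw [h0, hQ0, hempty, Finset.sum_empty]
        simp [sqNorm, Matrix.zero_mulVec]
      | succ m ih =>
        intro hm
        have hmn : m < n := hm
        have hsucc : (⟨m + 1, Nat.lt_succ_of_le hm⟩ : Fin (n + 1)) = (⟨m, hmn⟩ : Fin n).succ :=
          rfl
        have hcast : (⟨m, hmn⟩ : Fin n).castSucc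
            = (⟨m, Nat.lt_succ_of_le (Nat.le_of_lt hmn)⟩ : Fin (n + 1)) := rfl
        rw [hsucc, hstep ⟨m, hmn⟩ x, hcast, ih (Nat.le_of_lt hmn)]
        have hins : Finset.univ.filter (fun i' : Fin n => (i' : ℕ) < m + 1)
            = insert (⟨m, hmn⟩ : Fin n)
                (Finset.univ.filter (fun i' : Fin n => (i' : ℕ) < m)) := by
          ext j
          simp [Fin.ext_iff]
          omega
        rw [hins, Finset.sum_insert (by simp)]
        ring
    have h := htel n le_rfl
    have hlast : (Fin.last n) = ⟨n, Nat.lt_succ_of_le le_rfl⟩ := rfl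
    have hfil : Finset.univ.filter (fun i : Fin n => (i : ℕ) < n) = Finset.univ :=
      Finset.filter_true_of_mem (fun i _ => i.isLt)
    rw [hlast, h, hfil, Finset.sum_sub_distrib]
    congr 1
  -- gap bounds
  have hgap_nn : ∀ x : Fin d → ℝ, 0 ≤ ∑ i, δ i * sqNorm ((Y i)ᵀ.mulVec x) :=
    fun x => Finset.sum_nonneg fun i _ => mul_nonneg (hδnn i) (sqNorm_nonneg' _)
  have hgap_le : ∀ x : Fin d → ℝ,
      ∑ i, δ i * sqNorm ((Y i)ᵀ.mulVec x) ≤ (∑ i, δ i) * sqNorm x := by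
    intro x
    rw [Finset.sum_mul]
    apply Finset.sum_le_sum
    intro i _
    exact mul_le_mul_of_nonneg_left (bessel (Y i) (hY i) x) (hδnn i)
  -- Frobenius identity
  have hGcol : ∀ i : Fin n, ∑ t, sqNorm ((Y i)ᵀ.mulVec (Pi.single t 1)) = (ℓ : ℝ) := by
    intro i
    have h1 : ∀ j : Fin ℓ, ∑ t, Y i t j * Y i t j = 1 := by
      intro j
      have := congrFun (congrFun (hY i) j) j
      simpa [Matrix.mul_apply, Matrix.one_apply] using this
    have h2 : ∀ t, sqNorm ((Y i)ᵀ.mulVec (Pi.single t 1)) = ∑ j, (Y i t j) ^ 2 := by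
      intro t
      simp [sqNorm, mulVec, dotProduct, Pi.single_apply, mul_ite]
    rw [Finset.sum_congr rfl fun t _ => h2 t, Finset.sum_comm]
    calc ∑ j : Fin ℓ, ∑ t, (Y i t j) ^ 2 = ∑ j : Fin ℓ, (1 : ℝ) := by
          apply Finset.sum_congr rfl
          intro j _
          rw [← h1 j]
          apply Finset.sum_congr rfl
          intros; ring
      _ = (ℓ : ℝ) := by simp
  have hfrob : frobSq A = frobSq (Q (Fin.last n)) + (∑ i, δ i) * ℓ := by
    rw [frobSq_eq_cols A, frobSq_eq_cols (Q (Fin.last n))]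
    rw [Finset.sum_congr rfl fun t _ => hmain (Pi.single t 1)]
    rw [Finset.sum_sub_distrib, Finset.sum_comm]
    have h3 : ∑ i, ∑ t, δ i * sqNorm ((Y i)ᵀ.mulVec (Pi.single t 1)) = (∑ i, δ i) * ℓ := by
      rw [Finset.sum_congr rfl fun i (_ : i ∈ Finset.univ) => by
        rw [← Finset.mul_sum, hGcol i]]
      rw [← Finset.sum_mul]
    rw [h3]
    ring
  -- spectral formulas
  have hSA := spectral A v σA hv hAv
  have hSQ := spectral (Q (Fin.last n)) y τ hy hQy
  have hvunit : ∀ a, sqNorm (v a) = 1 := by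
    intro a; have := hv a a; simpa [sqNorm, sq] using this
  have hyunit : ∀ a, sqNorm (y a) = 1 := by
    intro a; have := hy a a; simpa [sqNorm, sq] using this
  have hAvnorm : ∀ a, sqNorm (A.mulVec (v a)) = σA a ^ 2 := by
    intro a
    rw [hSA (v a), Finset.sum_eq_single a]
    · rw [show v a ⬝ᵥ v a = 1 from by simpa [dotProduct] using hv a a]; ring
    · intro b _ hb
      rw [show v b ⬝ᵥ v a = 0 from by simpa [dotProduct, hb] using hv b a]; ring
    · intro h; exact absurd (Finset.mem_univ a) h
  have hQynorm : ∀ a, sqNorm ((Q (Fin.last n)).mulVec (y a)) = τ a ^ 2 := by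
    intro a
    rw [hSQ (y a), Finset.sum_eq_single a]
    · rw [show y a ⬝ᵥ y a = 1 from by simpa [dotProduct] using hy a a]; ring
    · intro b _ hb
      rw [show y b ⬝ᵥ y a = 0 from by simpa [dotProduct, hb] using hy b a]; ring
    · intro h; exact absurd (Finset.mem_univ a) h
  set K := Finset.univ.filter (fun i : Fin d => (i : ℕ) < k) with hKdef
  have hKk : (K.card : ℝ) ≤ (k : ℝ) := by
    have h : K.card ≤ (Finset.range k).card :=
      Finset.card_le_card_of_injOn (fun a => (a : ℕ))
        (fun a ha => by
          simp only [hKdef, Finset.mem_coe, Finset.mem_filter] at ha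
          simp [ha.2])
        (fun a _ b _ hab => Fin.ext hab)
    rw [Finset.card_range] at h
    exact_mod_cast h
  have hPv := parseval v hv
  have hPy := parseval y hy
  -- generic rearrangement application
  have happ : ∀ (σ' : Fin d → ℝ) (v' y' : Fin d → Fin d → ℝ),
      (∀ a b : Fin d, a ≤ b → σ' b ≤ σ' a) → (∀ a, 0 ≤ σ' a) →
      (∀ a b : Fin d, ∑ t, v' a t * v' b t = if a = b then 1 else 0) →
      (∀ a b : Fin d, ∑ t, y' a t * y' b t = if a = b then 1 else 0) →
      ∑ i ∈ K, ∑ a, σ' a ^ 2 * (v' a ⬝ᵥ y' i) ^ 2 ≤ ∑ a ∈ K, σ' a ^ 2 := by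
    intro σ' v' y' hm hn hv' hy'
    have hvu : ∀ a, sqNorm (v' a) = 1 := by
      intro a; have := hv' a a; simpa [sqNorm, sq] using this
    have hyu : ∀ a, sqNorm (y' a) = 1 := by
      intro a; have := hy' a a; simpa [sqNorm, sq] using this
    have hswap : ∑ i ∈ K, ∑ a, σ' a ^ 2 * (v' a ⬝ᵥ y' i) ^ 2
        = ∑ a, σ' a ^ 2 * (∑ i ∈ K, (v' a ⬝ᵥ y' i) ^ 2) := by
      rw [Finset.sum_comm]
      apply Finset.sum_congr rfl
      intro a _
      rw [Finset.mul_sum]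
    rw [hswap, hKdef]
    apply rearr k (fun a => σ' a ^ 2) (fun a => ∑ i ∈ K, (v' a ⬝ᵥ y' i) ^ 2)
    · intro a b hab
      exact pow_le_pow_left₀ (hn b) (hm a b hab) 2
    · intro a; positivity
    · intro a; positivity
    · intro a
      have hle : ∑ i ∈ K, (v' a ⬝ᵥ y' i) ^ 2 ≤ ∑ i, (v' a ⬝ᵥ y' i) ^ 2 :=
        Finset.sum_le_sum_of_subset_of_nonneg (Finset.subset_univ K)
          (fun i _ _ => sq_nonneg _)
      have heq : ∑ i, (v' a ⬝ᵥ y' i) ^ 2 = 1 := by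
        calc ∑ i, (v' a ⬝ᵥ y' i) ^ 2 = ∑ i, (y' i ⬝ᵥ v' a) ^ 2 := by
              apply Finset.sum_congr rfl
              intros; rw [dotProduct_comm]
          _ = sqNorm (v' a) := parseval y' hy' (v' a)
          _ = 1 := hvu a
      linarith
    · have h1 : ∑ a, ∑ i ∈ K, (v' a ⬝ᵥ y' i) ^ 2
          = ∑ i ∈ K, ∑ a, (v' a ⬝ᵥ y' i) ^ 2 := Finset.sum_comm
      rw [h1]
      have h2 : ∀ i, ∑ a, (v' a ⬝ᵥ y' i) ^ 2 = 1 := by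
        intro i
        rw [parseval v' hv' (y' i), hyu i]
      rw [Finset.sum_congr rfl fun i _ => h2 i]
      rw [← hKdef]
      simp
  have hR1 : ∑ i ∈ K, sqNorm (A.mulVec (y i)) ≤ ∑ a ∈ K, σA a ^ 2 := by
    have := happ σA v y hσmono hσnn hv hy
    calc ∑ i ∈ K, sqNorm (A.mulVec (y i))
        = ∑ i ∈ K, ∑ a, σA a ^ 2 * (v a ⬝ᵥ y i) ^ 2 :=
          Finset.sum_congr rfl fun i _ => hSA (y i)
      _ ≤ ∑ a ∈ K, σA a ^ 2 := this
  have hR2 : ∑ i ∈ K, sqNorm ((Q (Fin.last n)).mulVec (v i)) ≤ ∑ a ∈ K, τ a ^ 2 := by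
    have := happ τ y v hτmono hτnn hy hv
    calc ∑ i ∈ K, sqNorm ((Q (Fin.last n)).mulVec (v i))
        = ∑ i ∈ K, ∑ a, τ a ^ 2 * (y a ⬝ᵥ v i) ^ 2 :=
          Finset.sum_congr rfl fun i _ => hSQ (v i)
      _ ≤ ∑ a ∈ K, τ a ^ 2 := this
  have hσK : ∑ a ∈ K, σA a ^ 2 = ∑ i ∈ K, sqNorm (A.mulVec (v i)) :=
    Finset.sum_congr rfl fun a _ => (hAvnorm a).symm
  have hτK : ∑ a ∈ K, τ a ^ 2 = ∑ i ∈ K, sqNorm ((Q (Fin.last n)).mulVec (y i)) :=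
    Finset.sum_congr rfl fun a _ => (hQynorm a).symm
  have hfrobA_eig : frobSq A = ∑ a, σA a ^ 2 := by
    rw [frobSq_eq_cols A, Finset.sum_congr rfl fun t (_ : t ∈ Finset.univ) => hSA (Pi.single t 1),
      Finset.sum_comm]
    apply Finset.sum_congr rfl
    intro a _
    have h1 : ∀ t, v a ⬝ᵥ Pi.single t 1 = v a t := by
      intro t; simp [dotProduct, Pi.single_apply, mul_ite]
    rw [Finset.sum_congr rfl fun t (_ : t ∈ Finset.univ) => by rw [h1 t]]
    rw [← Finset.mul_sum, show (∑ t, (v a t) ^ 2) = 1 from hvunit a, mul_one]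
  have hfrobQ_eig : frobSq (Q (Fin.last n)) = ∑ a, τ a ^ 2 := by
    rw [frobSq_eq_cols (Q (Fin.last n)),
      Finset.sum_congr rfl fun t (_ : t ∈ Finset.univ) => hSQ (Pi.single t 1),
      Finset.sum_comm]
    apply Finset.sum_congr rfl
    intro a _
    have h1 : ∀ t, y a ⬝ᵥ Pi.single t 1 = y a t := by
      intro t; simp [dotProduct, Pi.single_apply, mul_ite]
    rw [Finset.sum_congr rfl fun t (_ : t ∈ Finset.univ) => by rw [h1 t]]
    rw [← Finset.mul_sum, show (∑ t, (y a t) ^ 2) = 1 from hyunit a, mul_one]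
  -- abbreviations
  have hΔnn : 0 ≤ ∑ i, δ i := Finset.sum_nonneg fun i _ => hδnn i
  have hℓR : (0 : ℝ) < (ℓ : ℝ) := by exact_mod_cast hℓ
  have hQy_le_Ay : ∀ i : Fin d,
      sqNorm ((Q (Fin.last n)).mulVec (y i)) ≤ sqNorm (A.mulVec (y i)) := by
    intro i
    have := hmain (y i)
    linarith [hgap_nn (y i)]
  have hSQy_le_SAy : ∑ i ∈ K, sqNorm ((Q (Fin.last n)).mulVec (y i))
      ≤ ∑ i ∈ K, sqNorm (A.mulVec (y i)) :=
    Finset.sum_le_sum fun i _ => hQy_le_Ay i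
  have hSAy_le_SAv : ∑ i ∈ K, sqNorm (A.mulVec (y i)) ≤ ∑ i ∈ K, sqNorm (A.mulVec (v i)) :=
    hR1.trans (le_of_eq hσK)
  have hQv_ge : ∀ i : Fin d, sqNorm (A.mulVec (v i)) - (∑ j, δ j)
      ≤ sqNorm ((Q (Fin.last n)).mulVec (v i)) := by
    intro i
    have h1 := hmain (v i)
    have h2 := hgap_le (v i)
    rw [hvunit i, mul_one] at h2
    linarith
  have hSQv_ge : ∑ i ∈ K, sqNorm (A.mulVec (v i)) - (K.card : ℝ) * (∑ j, δ j)
      ≤ ∑ i ∈ K, sqNorm ((Q (Fin.last n)).mulVec (v i)) := by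
    have h1 : ∑ i ∈ K, (sqNorm (A.mulVec (v i)) - (∑ j, δ j))
        ≤ ∑ i ∈ K, sqNorm ((Q (Fin.last n)).mulVec (v i)) :=
      Finset.sum_le_sum fun i _ => hQv_ge i
    have h2 : ∑ i ∈ K, (sqNorm (A.mulVec (v i)) - (∑ j, δ j))
        = ∑ i ∈ K, sqNorm (A.mulVec (v i)) - (K.card : ℝ) * (∑ j, δ j) := by
      rw [Finset.sum_sub_distrib, Finset.sum_const, nsmul_eq_mul]
    linarith
  have hSQy_ge : ∑ i ∈ K, sqNorm (A.mulVec (v i)) - (K.card : ℝ) * (∑ j, δ j)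
      ≤ ∑ i ∈ K, sqNorm ((Q (Fin.last n)).mulVec (y i)) :=
    le_trans (le_trans hSQv_ge hR2) (le_of_eq hτK)
  have hSQy_le_frobQ : ∑ i ∈ K, sqNorm ((Q (Fin.last n)).mulVec (y i))
      ≤ frobSq (Q (Fin.last n)) := by
    rw [← hτK, hfrobQ_eig]
    exact Finset.sum_le_sum_of_subset_of_nonneg (Finset.subset_univ K)
      (fun i _ _ => sq_nonneg _)
  have hRnn : 0 ≤ frobSq A - ∑ i ∈ K, sqNorm (A.mulVec (v i)) := by
    rw [hfrobA_eig, ← hσK]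
    have : ∑ a ∈ K, σA a ^ 2 ≤ ∑ a, σA a ^ 2 :=
      Finset.sum_le_sum_of_subset_of_nonneg (Finset.subset_univ K)
        (fun i _ _ => sq_nonneg _)
    linarith
  have hεk : (k : ℝ) + (k : ℝ) / ε ≤ (ℓ : ℝ) := by
    rw [hℓdef]
    exact Nat.le_ceil _
  have hΔbound : (∑ j, δ j) * ((ℓ : ℝ) - (K.card : ℝ))
      ≤ frobSq A - ∑ i ∈ K, sqNorm (A.mulVec (v i)) := by
    nlinarith [hfrob, hSQy_le_frobQ, hSQy_ge]
  have hkΔ : (k : ℝ) * (∑ j, δ j) ≤ ε * (frobSq A - ∑ i ∈ K, sqNorm (A.mulVec (v i))) := by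
    have hε' : (k : ℝ) / ε ≤ (ℓ : ℝ) - (k : ℝ) := by linarith
    have h1 : (∑ j, δ j) * ((k : ℝ) / ε) ≤ (∑ j, δ j) * ((ℓ : ℝ) - (k : ℝ)) :=
      mul_le_mul_of_nonneg_left hε' hΔnn
    have h2 : (∑ j, δ j) * ((ℓ : ℝ) - (k : ℝ)) ≤ (∑ j, δ j) * ((ℓ : ℝ) - (K.card : ℝ)) :=
      mul_le_mul_of_nonneg_left (by linarith) hΔnn
    have h3 : (∑ j, δ j) * ((k : ℝ) / ε) ≤ frobSq A - ∑ i ∈ K, sqNorm (A.mulVec (v i)) :=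
      le_trans (h1.trans h2) hΔbound
    have h4 : ε * ((∑ j, δ j) * ((k : ℝ) / ε))
        ≤ ε * (frobSq A - ∑ i ∈ K, sqNorm (A.mulVec (v i))) :=
      mul_le_mul_of_nonneg_left h3 hε0.le
    have h5 : ε * ((∑ j, δ j) * ((k : ℝ) / ε)) = (k : ℝ) * (∑ j, δ j) := by
      field_simp
    linarith
  have hupper : frobSq A - ∑ i ∈ K, sqNorm ((Q (Fin.last n)).mulVec (y i))
      ≤ (1 + ε) * (frobSq A - ∑ i ∈ K, sqNorm (A.mulVec (v i))) := by
    have hKΔ : (K.card : ℝ) * (∑ j, δ j) ≤ (k : ℝ) * (∑ j, δ j) :=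
      mul_le_mul_of_nonneg_right hKk hΔnn
    nlinarith [hSQy_ge]
  refine ⟨?_, ?_, ?_, hupper⟩
  · -- part (i)
    intro x hx
    have h := hmain x
    constructor
    · linarith [hgap_nn x]
    · have h2 := hgap_le x
      rw [hx, mul_one] at h2
      have hΔdiv : (∑ j, δ j) ≤ frobSq A / (ℓ : ℝ) := by
        rw [le_div_iff₀ hℓR]
        have := frobSq_nonneg' (Q (Fin.last n))
        nlinarith [hfrob]
      linarith
  · -- part (ii)
    rw [proj_frob A y hy K]
    have := hSQy_le_SAy
    linarith [hupper]
  · -- part (iii) lower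
    linarith [hSQy_le_SAy.trans hSAy_le_SAv]
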